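/- Let u ≥ 1 and let H be a graph with dom(H) ≥ u. Suppose G is a graph in which every u-clique c that is contained in the dominating-vertex set of some copy of H satisfies ω(c) ≥ ω_0(H^{↓u}) + u, where ω_0 has the Turán-maximality property. Then Σ_{J ∈ H(G)} 1 / N(H^{↓u}, T_{ω(J)−u}(Δ(J))) ≤ k^u(G) / C(dom(H), u). -/

import Mathlib

open SimpleGraph Finset Filter Topology

/-- `F` is contained in `G` as a subgraph: there is an injective graph homomorphism. -/
def Graph.Contains {β α : Type*} (F : SimpleGraph β) (G : SimpleGraph α) : Prop :=
  ∃ f : F →g G, Function.Injective f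

/-- The number of subgraphs of `G` isomorphic to `H`. -/
noncomputable def copyCount {β α : Type*} (H : SimpleGraph β) (G : SimpleGraph α) : ℕ :=
  {J : G.Subgraph | Nonempty (J.coe ≃g H)}.ncard

/-- The number of `u`-cliques of `G`. -/
noncomputable def kclique {α : Type*} (u : ℕ) (G : SimpleGraph α) : ℕ :=
  {s : Finset α | G.IsNClique u s}.ncard

/-- The set of dominating vertices of a graph. -/
def domSet {α : Type*} (H : SimpleGraph α) : Set α := {v | ∀ w, w ≠ v → H.Adj v w}

/-- The number of dominating vertices of a graph. -/
noncomputable def domCount {α : Type*} (H : SimpleGraph α) : ℕ := (domSet H).ncard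

/-- The set of dominating vertices of a subgraph `J`: vertices of `J` adjacent in `J`
to all other vertices of `J`. -/
def subDomSet {α : Type*} {G : SimpleGraph α} (J : G.Subgraph) : Set α :=
  {v ∈ J.verts | ∀ w ∈ J.verts, w ≠ v → J.Adj v w}

/-- The common neighborhood of a finite vertex set `c` in `G`. -/
def commonNbhd {α : Type*} (G : SimpleGraph α) (c : Finset α) : Set α :=
  {v | ∀ x ∈ c, G.Adj x v}

/-- `ω(c)`: the size of a largest clique of `G` containing `c`. -/
noncomputable def omegaC {α : Type*} (G : SimpleGraph α) (c : Finset α) : ℕ :=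
  sSup {m | ∃ s : Finset α, c ⊆ s ∧ G.IsNClique m s}

/-- `Δ(c)`: the number of common neighbors of `c` in `G`. -/
noncomputable def deltaC {α : Type*} (G : SimpleGraph α) (c : Finset α) : ℕ :=
  (commonNbhd G c).ncard

/-- `ω(J)`: the max of `ω(c)` over `u`-sets `c` of dominating vertices of the subgraph `J`. -/
noncomputable def omegaJ {α : Type*} (G : SimpleGraph α) (u : ℕ) (J : G.Subgraph) : ℕ :=
  sSup {m | ∃ c : Finset α, ↑c ⊆ subDomSet J ∧ c.card = u ∧ m = omegaC G c}

/-- `Δ(J)`: the max of `Δ(c)` over `u`-sets `c` of dominating vertices of the subgraph `J`. -/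
noncomputable def deltaJ {α : Type*} (G : SimpleGraph α) (u : ℕ) (J : G.Subgraph) : ℕ :=
  sSup {m | ∃ c : Finset α, ↑c ⊆ subDomSet J ∧ c.card = u ∧ m = deltaC G c}

/-- The complete split graph `K_u ∨ I_d`. -/
def completeSplitGraph (u d : ℕ) : SimpleGraph (Fin u ⊕ Fin d) where
  Adj x y := x ≠ y ∧ (x.isLeft ∨ y.isLeft)
  symm := ⟨by rintro x y ⟨h1, h2⟩; exact ⟨h1.symm, h2.symm⟩⟩
  loopless := ⟨by rintro x ⟨h, -⟩; exact h rfl⟩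

/-- Disjoint union of a family of graphs. -/
def sigmaGraph {ι : Type*} {β : ι → Type*} (G : ∀ i, SimpleGraph (β i)) :
    SimpleGraph (Σ i, β i) where
  Adj x y := ∃ (i : ι) (a b : β i), x = ⟨i, a⟩ ∧ y = ⟨i, b⟩ ∧ (G i).Adj a b
  symm := ⟨by rintro x y ⟨i, a, b, rfl, rfl, hab⟩; exact ⟨i, b, a, rfl, rfl, hab.symm⟩⟩
  loopless := ⟨by
    rintro x ⟨i, a, b, rfl, h2, hab⟩
    injection h2 with h1 h2'
    exact hab.ne h2'⟩

/-- `ex_u(p, H, F)`: maximum number of copies of `H` in an `F`-free graph with exactly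
`p` `u`-cliques (graphs taken on `Fin n` for some `n`). -/
noncomputable def exu {ι : Type*} {β : ι → Type*} (u p : ℕ) {h : ℕ} (H : SimpleGraph (Fin h))
    (F : ∀ i, SimpleGraph (β i)) : ℕ :=
  sSup {N | ∃ (n : ℕ) (G : SimpleGraph (Fin n)),
    (∀ i, ¬ Graph.Contains (F i) G) ∧ kclique u G = p ∧ _root_.copyCount H G = N}



/-! ### Auxiliary lemmas -/

-- basic: adjacency of a dominating vertex
lemma domAdj {α : Type*} {H : SimpleGraph α} {v w : α} (hv : v ∈ domSet H) :
    H.Adj v w ↔ w ≠ v :=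
  ⟨fun h hw => H.loopless.irrefl v (hw ▸ h), fun h => hv w h⟩

-- finiteness of subgraphs
instance subgraphFinite {V : Type*} [Finite V] (G : SimpleGraph V) : Finite G.Subgraph :=
  Finite.of_injective (fun J => (J.verts, J.Adj))
    (by rintro ⟨⟩ ⟨⟩ h; simp only [Prod.mk.injEq] at h; exact SimpleGraph.Subgraph.ext h.1 h.2)

-- iso between coe of subgraph and coe of mapped subgraph
noncomputable def mapCoeIso {V W : Type*} {G : SimpleGraph V} {G' : SimpleGraph W}
    (f : G ↪g G') (J : G.Subgraph) : J.coe ≃g (J.map f.toHom).coe where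
  toEquiv := Equiv.ofBijective (fun x => ⟨f ↑x, ⟨↑x, x.2, rfl⟩⟩)
    (by
      constructor
      · intro a b hab
        simp only [Subtype.mk.injEq] at hab
        exact Subtype.ext (f.injective (congrArg Subtype.val hab))
      · rintro ⟨w, ⟨a, ha, rfl⟩⟩
        exact ⟨⟨a, ha⟩, rfl⟩)
  map_rel_iff' := by
    rintro ⟨a, ha⟩ ⟨b, hb⟩
    simp only [Equiv.ofBijective_apply, SimpleGraph.Subgraph.coe_adj,
      SimpleGraph.Subgraph.map_adj]
    constructor
    · rintro ⟨a', b', hab, ha', hb'⟩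
      rw [f.injective ha', f.injective hb'] at hab; exact hab
    · intro h; exact ⟨a, b, h, rfl, rfl⟩

lemma copyCount_le_of_embedding {β V W : Type*} [Finite W] (Hb : SimpleGraph β)
    {G : SimpleGraph V} {G' : SimpleGraph W} (f : G ↪g G') :
    _root_.copyCount Hb G ≤ _root_.copyCount Hb G' := by
  apply Set.ncard_le_ncard_of_injOn (fun J => J.map f.toHom)
  · rintro J ⟨i⟩
    exact ⟨(mapCoeIso f J).symm.trans i⟩
  · intro J1 _ J2 _ h
    dsimp only at h
    ext x y
    · constructor <;> intro hx
      · have : f x ∈ (J2.map f.toHom).verts := h ▸ ⟨x, hx, rfl⟩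
        obtain ⟨a, ha, hfa⟩ := this
        rwa [← f.injective hfa]
      · have : f x ∈ (J1.map f.toHom).verts := h ▸ ⟨x, hx, rfl⟩
        obtain ⟨a, ha, hfa⟩ := this
        rwa [← f.injective hfa]
    · constructor <;> intro hxy
      · have : (J2.map f.toHom).Adj (f x) (f y) := h ▸ ⟨x, y, hxy, rfl, rfl⟩
        obtain ⟨a, b, hab, ha, hb⟩ := this
        rwa [← f.injective ha, ← f.injective hb]
      · have : (J1.map f.toHom).Adj (f x) (f y) := h ▸ ⟨x, y, hxy, rfl, rfl⟩
        obtain ⟨a, b, hab, ha, hb⟩ := this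
        rwa [← f.injective ha, ← f.injective hb]

lemma copyCount_eq_of_iso {β V W : Type*} [Finite V] [Finite W] (Hb : SimpleGraph β)
    {G : SimpleGraph V} {G' : SimpleGraph W} (f : G ≃g G') :
    _root_.copyCount Hb G = _root_.copyCount Hb G' :=
  le_antisymm (copyCount_le_of_embedding Hb f.toEmbedding)
    (copyCount_le_of_embedding Hb f.symm.toEmbedding)

lemma induce_compl_iso {h : ℕ} (H : SimpleGraph (Fin h)) (S T : Set (Fin h))
    (hS : S ⊆ domSet H) (hT : T ⊆ domSet H) (hcard : S.ncard = T.ncard) :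
    Nonempty (H.induce Sᶜ ≃g H.induce Tᶜ) := by
  classical
  have h1 := Set.ncard_inter_add_ncard_diff_eq_ncard S T (Set.toFinite S)
  have h2 := Set.ncard_inter_add_ncard_diff_eq_ncard T S (Set.toFinite T)
  rw [Set.inter_comm] at h2
  have hd : (T \ S).ncard = (S \ T).ncard := by omega
  have hg : Nonempty (↥(T \ S) ≃ ↥(S \ T)) := by
    rw [← Finite.card_eq, Nat.card_coe_set_eq, Nat.card_coe_set_eq]; exact hd
  obtain ⟨g⟩ := hg
  have toMem : ∀ x : ↥Sᶜ, ∀ hx : ↑x ∈ T, ↑(g ⟨↑x, hx, x.2⟩) ∈ Tᶜ := fun x hx => (g _).2.2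
  have invMem : ∀ y : ↥Tᶜ, ∀ hy : ↑y ∈ S, ↑(g.symm ⟨↑y, hy, y.2⟩) ∈ Sᶜ :=
    fun y hy => (g.symm _).2.2
  set F : ↥Sᶜ → ↥Tᶜ :=
    fun x => if hx : ↑x ∈ T then ⟨↑(g ⟨↑x, hx, x.2⟩), toMem x hx⟩ else ⟨↑x, hx⟩ with hF
  set F' : ↥Tᶜ → ↥Sᶜ :=
    fun y => if hy : ↑y ∈ S then ⟨↑(g.symm ⟨↑y, hy, y.2⟩), invMem y hy⟩ else ⟨↑y, hy⟩ with hF'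
  have hFpos : ∀ (x : ↥Sᶜ) (hx : ↑x ∈ T), (↑(F x) : Fin h) = ↑(g ⟨↑x, hx, x.2⟩) := by
    intro x hx; rw [hF]; simp only [dif_pos hx]
  have hFneg : ∀ (x : ↥Sᶜ) (hx : ↑x ∉ T), (↑(F x) : Fin h) = ↑x := by
    intro x hx; rw [hF]; simp only [dif_neg hx]
  have hF'pos : ∀ (y : ↥Tᶜ) (hy : ↑y ∈ S), (↑(F' y) : Fin h) = ↑(g.symm ⟨↑y, hy, y.2⟩) := by
    intro y hy; rw [hF']; simp only [dif_pos hy]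
  have hF'neg : ∀ (y : ↥Tᶜ) (hy : ↑y ∉ S), (↑(F' y) : Fin h) = ↑y := by
    intro y hy; rw [hF']; simp only [dif_neg hy]
  have hleft : Function.LeftInverse F' F := by
    intro x
    apply Subtype.ext
    by_cases hx : ↑x ∈ T
    · have h1' := hFpos x hx
      have hmem : (↑(F x) : Fin h) ∈ S := by rw [h1']; exact (g _).2.1
      rw [hF'pos (F x) hmem]
      have : (⟨↑(F x), hmem, (F x).2⟩ : ↥(S \ T)) = g ⟨↑x, hx, x.2⟩ := Subtype.ext h1'
      rw [this, Equiv.symm_apply_apply]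
    · have h1' := hFneg x hx
      have hmem : (↑(F x) : Fin h) ∉ S := by rw [h1']; exact x.2
      rw [hF'neg (F x) hmem, h1']
  have hright : Function.RightInverse F' F := by
    intro y
    apply Subtype.ext
    by_cases hy : ↑y ∈ S
    · have h1' := hF'pos y hy
      have hmem : (↑(F' y) : Fin h) ∈ T := by rw [h1']; exact (g.symm _).2.1
      rw [hFpos (F' y) hmem]
      have : (⟨↑(F' y), hmem, (F' y).2⟩ : ↥(T \ S)) = g.symm ⟨↑y, hy, y.2⟩ := Subtype.ext h1'
      rw [this, Equiv.apply_symm_apply]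
    · have h1' := hF'neg y hy
      have hmem : (↑(F' y) : Fin h) ∉ T := by rw [h1']; exact y.2
      rw [hFneg (F' y) hmem, h1']
  set e : ↥Sᶜ ≃ ↥Tᶜ := ⟨F, F', hleft, hright⟩ with he
  have heval : ∀ x : ↥Sᶜ, e x = F x := fun x => rfl
  have key : ∀ x : ↥Sᶜ, (↑(e x) : Fin h) = ↑x ∨ ((↑x : Fin h) ∈ T ∧ (↑(e x) : Fin h) ∈ S) := by
    intro x
    by_cases hx : ↑x ∈ T
    · right
      refine ⟨hx, ?_⟩
      rw [heval, hFpos x hx]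
      exact (g _).2.1
    · left
      rw [heval, hFneg x hx]
  have hEq2 : ∀ a b : ↥Sᶜ, ((↑(e a) : Fin h) = ↑(e b)) ↔ ((↑a : Fin h) = ↑b) := by
    intro a b
    constructor
    · intro hh; exact congrArg _ (e.injective (Subtype.ext hh))
    · intro hh; exact congrArg _ (congrArg e (Subtype.ext hh))
  refine ⟨⟨e, ?_⟩⟩
  intro x y
  simp only [comap_adj, Function.Embedding.coe_subtype]
  rcases key x with hx | ⟨hxT, hexS⟩
  · rcases key y with hy | ⟨hyT, heyS⟩
    · rw [hx, hy]
    · rw [H.adj_comm (↑(e x)) (↑(e y)), H.adj_comm (↑x) (↑y),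
        domAdj (hS heyS), domAdj (hT hyT)]
      exact not_congr (hEq2 x y)
  · rw [domAdj (hS hexS), domAdj (hT hxT)]
    exact not_congr (hEq2 y x)


section CliqueHelpers
variable {V : Type*} {G : SimpleGraph V}

lemma isClique_of_subDom {J : G.Subgraph} {c : Finset V} (hc : ↑c ⊆ subDomSet J) :
    G.IsClique (↑c : Set V) := by
  intro x hx y hy hxy
  exact J.adj_sub ((hc hx).2 y (hc hy).1 (Ne.symm hxy))

lemma mem_common_not_mem {c : Finset V} {v : V} (hv : v ∈ commonNbhd G c) : v ∉ c :=
  fun hvc => G.loopless.irrefl v (hv v hvc)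

lemma verts_not_c_mem_common {J : G.Subgraph} {c : Finset V} (hc : ↑c ⊆ subDomSet J)
    {v : V} (hv : v ∈ J.verts) (hvc : v ∉ c) : v ∈ commonNbhd G c := by
  intro x hx
  exact J.adj_sub ((hc hx).2 v hv (fun hh => hvc (hh ▸ hx)))

variable [Fintype V]

lemma omegaC_bdd (c : Finset V) :
    BddAbove {m | ∃ s : Finset V, c ⊆ s ∧ G.IsNClique m s} := by
  refine ⟨Fintype.card V, ?_⟩
  rintro m ⟨s, -, hs⟩
  rw [← hs.card_eq]
  exact s.card_le_univ

lemma le_omegaC {c s : Finset V} {m : ℕ} (hcs : c ⊆ s) (hs : G.IsNClique m s) :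
    m ≤ omegaC G c :=
  le_csSup (omegaC_bdd c) ⟨s, hcs, hs⟩

lemma omegaC_le_card (c : Finset V) : omegaC G c ≤ Fintype.card V := by
  apply csSup_le'
  rintro m ⟨s, -, hs⟩
  rw [← hs.card_eq]
  exact s.card_le_univ

lemma deltaC_le_card (c : Finset V) : deltaC G c ≤ Fintype.card V := by
  refine le_trans (Set.ncard_le_ncard (Set.subset_univ _) Set.finite_univ) ?_
  rw [Set.ncard_univ]
  exact le_of_eq Nat.card_eq_fintype_card

lemma clique_common_le_omegaC {c t : Finset V} {u m : ℕ} (hc : G.IsNClique u c)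
    (ht : ↑t ⊆ commonNbhd G c) (htc : G.IsNClique m t) : u + m ≤ omegaC G c := by
  classical
  apply le_omegaC (Finset.subset_union_left)
  constructor
  · intro x hx y hy hxy
    simp only [Finset.coe_union, Set.mem_union, Finset.mem_coe] at hx hy
    rcases hx with hx | hx <;> rcases hy with hy | hy
    · exact hc.1 hx hy hxy
    · exact ht hy x hx
    · exact (ht hx y hy).symm
    · exact htc.1 hx hy hxy
  · rw [Finset.card_union_of_disjoint, hc.card_eq, htc.card_eq]
    rw [Finset.disjoint_left]
    exact fun {a} ha hat => mem_common_not_mem (ht hat) ha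

lemma le_omegaJ {u : ℕ} {J : G.Subgraph} {c : Finset V} (hc : ↑c ⊆ subDomSet J)
    (hcard : c.card = u) : omegaC G c ≤ omegaJ G u J := by
  have hbdd : BddAbove {m | ∃ c' : Finset V, ↑c' ⊆ subDomSet J ∧ c'.card = u ∧ m = omegaC G c'} := by
    refine ⟨Fintype.card V, ?_⟩
    rintro m ⟨c', -, -, rfl⟩
    exact omegaC_le_card c'
  exact le_csSup hbdd ⟨c, hc, hcard, rfl⟩

lemma le_deltaJ {u : ℕ} {J : G.Subgraph} {c : Finset V} (hc : ↑c ⊆ subDomSet J)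
    (hcard : c.card = u) : deltaC G c ≤ deltaJ G u J := by
  have hbdd : BddAbove {m | ∃ c' : Finset V, ↑c' ⊆ subDomSet J ∧ c'.card = u ∧ m = deltaC G c'} := by
    refine ⟨Fintype.card V, ?_⟩
    rintro m ⟨c', -, -, rfl⟩
    exact deltaC_le_card c'
  exact le_csSup hbdd ⟨c, hc, hcard, rfl⟩

end CliqueHelpers

section DomTransfer
variable {V : Type*} {G : SimpleGraph V} {h : ℕ} {H : SimpleGraph (Fin h)}

lemma subDom_iff {J : G.Subgraph} (f : J.coe ≃g H) (v : J.verts) :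
    ↑v ∈ subDomSet J ↔ f v ∈ domSet H := by
  constructor
  · rintro ⟨hv, hd⟩ w hw
    rw [← f.apply_symm_apply w]
    apply f.map_rel_iff.mpr
    rw [SimpleGraph.Subgraph.coe_adj]
    refine hd ↑(f.symm w) (f.symm w).2 (fun heq => hw ?_)
    have : f.symm w = v := Subtype.ext (by exact_mod_cast heq)
    rw [← this, f.apply_symm_apply]
  · intro hfv
    refine ⟨v.2, fun w hw hne => ?_⟩
    have hadj : H.Adj (f v) (f ⟨w, hw⟩) := by
      rw [domAdj hfv]
      intro heq
      exact hne (congrArg Subtype.val (f.injective heq))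
    have := f.map_rel_iff.mp hadj
    rwa [SimpleGraph.Subgraph.coe_adj] at this

lemma ncard_subDom {J : G.Subgraph} (f : J.coe ≃g H) :
    (subDomSet J).ncard = domCount H := by
  rw [domCount, ← Nat.card_coe_set_eq, ← Nat.card_coe_set_eq]
  apply Nat.card_congr
  refine Equiv.ofBijective
    (fun x => ⟨f ⟨↑x, x.2.1⟩, (subDom_iff f ⟨↑x, x.2.1⟩).mp x.2⟩) ⟨?_, ?_⟩
  · intro a b hab
    simp only [Subtype.mk.injEq] at hab
    have h2 : (⟨↑a, a.2.1⟩ : J.verts) = ⟨↑b, b.2.1⟩ := f.injective hab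
    have h3 := congrArg (Subtype.val : J.verts → V) h2
    exact Subtype.ext h3
  · rintro ⟨w, hw⟩
    have hmem : ↑(f.symm w) ∈ subDomSet J := by
      rw [subDom_iff f (f.symm w), f.apply_symm_apply]
      exact hw
    refine ⟨⟨↑(f.symm w), hmem⟩, ?_⟩
    apply Subtype.ext
    show ↑(f ⟨↑(f.symm w), (f.symm w).2⟩) = w
    have : (⟨↑(f.symm w), (f.symm w).2⟩ : J.verts) = f.symm w := Subtype.ext rfl
    rw [this, f.apply_symm_apply]

end DomTransfer


section BigLemmas
variable {h : ℕ}

/-- Monotonicity of the Turán copy count in both parameters. -/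
lemma turan_count_mono (H : SimpleGraph (Fin h)) (D : Finset (Fin h)) (ω₀ : ℕ)
    (hTuran : ∀ r : ℕ, ω₀ ≤ r → ∀ (n : ℕ) (G' : SimpleGraph (Fin n)),
      G'.CliqueFree (r + 1) →
        _root_.copyCount (H.induce ((↑D : Set (Fin h))ᶜ)) G' ≤
          _root_.copyCount (H.induce ((↑D : Set (Fin h))ᶜ)) (turanGraph n r))
    {δ δ' r r' : ℕ} (hδ : δ ≤ δ') (hr : r ≤ r') (hω : ω₀ ≤ r) (h0 : r = 0 → δ = 0) :
    _root_.copyCount (H.induce ((↑D : Set (Fin h))ᶜ)) (turanGraph δ r) ≤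
      _root_.copyCount (H.induce ((↑D : Set (Fin h))ᶜ)) (turanGraph δ' r') := by
  have hfree : (turanGraph δ r).CliqueFree (r' + 1) := by
    rcases Nat.eq_zero_or_pos r with h0' | hpos
    · intro t ht
      have h1 := ht.card_eq
      have h2 : t.card ≤ Fintype.card (Fin δ) := t.card_le_univ
      rw [Fintype.card_fin] at h2
      have h3 : δ = 0 := h0 h0'
      omega
    · exact (turanGraph_cliqueFree (n := δ) hpos).mono (by omega)
  have step1 := hTuran r' (le_trans hω hr) δ (turanGraph δ r) hfree
  have emb : turanGraph δ r' ↪g turanGraph δ' r' := by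
    refine ⟨⟨Fin.castLE hδ, fun a b hab => ?_⟩, ?_⟩
    · exact Fin.castLE_injective hδ hab
    · intro a b
      show ((Fin.castLE hδ a : Fin δ') : ℕ) % r' ≠ ((Fin.castLE hδ b : Fin δ') : ℕ) % r' ↔ _
      simp [turanGraph]
  exact le_trans step1 (copyCount_le_of_embedding _ emb)

/-- The key counting lemma: the number of copies of `H` whose dominating set contains a
given `u`-clique `c` is at most the Turán count. -/
lemma key_count (H : SimpleGraph (Fin h)) (u : ℕ) (hu : 1 ≤ u)
    (D : Finset (Fin h)) (hD : ↑D ⊆ domSet H) (hDcard : D.card = u)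
    (ω₀ : ℕ)
    (hTuran : ∀ r : ℕ, ω₀ ≤ r → ∀ (n : ℕ) (G' : SimpleGraph (Fin n)),
      G'.CliqueFree (r + 1) →
        _root_.copyCount (H.induce ((↑D : Set (Fin h))ᶜ)) G' ≤
          _root_.copyCount (H.induce ((↑D : Set (Fin h))ᶜ)) (turanGraph n r))
    {V : Type*} [Fintype V] (G : SimpleGraph V)
    (c : Finset V) (hcard : c.card = u)
    (hω : ω₀ + u ≤ omegaC G c) (hclique : G.IsNClique u c) :
    {J : G.Subgraph | Nonempty (J.coe ≃g H) ∧ ↑c ⊆ subDomSet J}.ncard ≤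
      _root_.copyCount (H.induce ((↑D : Set (Fin h))ᶜ))
        (turanGraph (deltaC G c) (omegaC G c - u)) := by
  classical
  set Hd := H.induce ((↑D : Set (Fin h))ᶜ) with hHd
  set C := commonNbhd G c with hC
  set Gc := G.induce C with hGc
  set Φ : G.Subgraph → Gc.Subgraph := fun J =>
    { verts := {v : ↥C | ↑v ∈ J.verts}
      Adj := fun x y => J.Adj ↑x ↑y
      adj_sub := fun hxy => J.adj_sub hxy
      edge_vert := fun hxy => J.edge_vert hxy
      symm := ⟨fun x y hxy => J.symm.symm _ _ hxy⟩ } with hΦ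
  have step1 : {J : G.Subgraph | Nonempty (J.coe ≃g H) ∧ ↑c ⊆ subDomSet J}.ncard ≤
      _root_.copyCount Hd Gc := by
    apply Set.ncard_le_ncard_of_injOn Φ
    · rintro J ⟨⟨f⟩, hcJ⟩
      set S : Set (Fin h) := {w | (↑(f.symm w) : V) ∈ c} with hS
      have hSdom : S ⊆ domSet H := by
        intro w hw
        have := (subDom_iff f (f.symm w)).mp (hcJ hw)
        rwa [f.apply_symm_apply] at this
      have hScard : S.ncard = (↑D : Set (Fin h)).ncard := by
        have himg : (fun w : Fin h => (↑(f.symm w) : V)) '' S = ↑c := by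
          ext x
          constructor
          · rintro ⟨w, hw, rfl⟩; exact hw
          · intro hx
            have hxv : x ∈ J.verts := (hcJ hx).1
            refine ⟨f ⟨x, hxv⟩, ?_, ?_⟩
            · show (↑(f.symm (f ⟨x, hxv⟩)) : V) ∈ c
              rw [f.symm_apply_apply]
              exact hx
            · show (↑(f.symm (f ⟨x, hxv⟩)) : V) = x
              rw [f.symm_apply_apply]
        have hinj : Function.Injective (fun w : Fin h => (↑(f.symm w) : V)) := by
          intro a b hab
          exact (Equiv.injective f.symm.toEquiv) (Subtype.ext hab)
        rw [← Set.ncard_image_of_injective S hinj, himg, Set.ncard_coe_finset,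
          Set.ncard_coe_finset, hcard, hDcard]
      -- the isomorphism (Φ J).coe ≃g H.induce Sᶜ
      have hnotc : ∀ x : ↥((Φ J).verts), f ⟨↑↑x, x.2⟩ ∈ Sᶜ := by
        intro x hmem
        have : (↑(f.symm (f ⟨↑↑x, x.2⟩)) : V) ∈ c := hmem
        rw [f.symm_apply_apply] at this
        exact mem_common_not_mem x.1.2 this
      have hbij : Function.Bijective
          (fun x : ↥((Φ J).verts) => (⟨f ⟨↑↑x, x.2⟩, hnotc x⟩ : ↥Sᶜ)) := by
        constructor
        · intro a b hab
          simp only [Subtype.mk.injEq] at hab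
          have h2 : (⟨↑↑a, a.2⟩ : J.verts) = ⟨↑↑b, b.2⟩ := f.injective hab
          have h3 := congrArg (Subtype.val : J.verts → V) h2
          exact Subtype.ext (Subtype.ext h3)
        · rintro ⟨w, hw⟩
          have hvc : (↑(f.symm w) : V) ∉ c := hw
          have hvC : (↑(f.symm w) : V) ∈ C := verts_not_c_mem_common hcJ (f.symm w).2 hvc
          refine ⟨⟨⟨↑(f.symm w), hvC⟩, (f.symm w).2⟩, ?_⟩
          apply Subtype.ext
          show ↑(f ⟨↑(f.symm w), (f.symm w).2⟩) = w
          have : (⟨↑(f.symm w), (f.symm w).2⟩ : J.verts) = f.symm w := Subtype.ext rfl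
          rw [this, f.apply_symm_apply]
      have iso1 : (Φ J).coe ≃g H.induce Sᶜ := by
        refine ⟨Equiv.ofBijective _ hbij, ?_⟩
        intro x y
        simp only [Equiv.ofBijective_apply, comap_adj, Function.Embedding.coe_subtype]
        constructor
        · intro hadj
          have := f.map_rel_iff.mp hadj
          rw [SimpleGraph.Subgraph.coe_adj] at this
          exact this
        · intro hadj
          apply f.map_rel_iff.mpr
          rw [SimpleGraph.Subgraph.coe_adj]
          exact hadj
      obtain ⟨iso2⟩ := induce_compl_iso H S ↑D hSdom hD hScard
      exact ⟨iso1.trans iso2⟩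
    · rintro J1 ⟨hJ1, hc1⟩ J2 ⟨hJ2, hc2⟩ heq
      have hverts : J1.verts = J2.verts := by
        have hv : ∀ (Ja Jb : G.Subgraph), ↑c ⊆ subDomSet Ja → ↑c ⊆ subDomSet Jb →
            Φ Ja = Φ Jb → Ja.verts ⊆ Jb.verts := by
          intro Ja Jb hca hcb hab x hx
          by_cases hxc : x ∈ c
          · exact (hcb hxc).1
          · have hxC : x ∈ C := verts_not_c_mem_common hca hx hxc
            have h1 : (⟨x, hxC⟩ : ↥C) ∈ (Φ Ja).verts := hx
            rw [hab] at h1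
            exact h1
        exact le_antisymm (hv J1 J2 hc1 hc2 heq) (hv J2 J1 hc2 hc1 heq.symm)
      have hAdj : ∀ (Ja Jb : G.Subgraph), ↑c ⊆ subDomSet Ja → ↑c ⊆ subDomSet Jb →
          Ja.verts = Jb.verts → Φ Ja = Φ Jb → ∀ x y, Ja.Adj x y → Jb.Adj x y := by
        intro Ja Jb hca hcb hvab hab x y hxy
        have hne : x ≠ y := hxy.ne
        have hx : x ∈ Ja.verts := Ja.edge_vert hxy
        have hy : y ∈ Ja.verts := Ja.edge_vert hxy.symm
        by_cases hxc : x ∈ c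
        · exact (hcb hxc).2 y (hvab ▸ hy) (Ne.symm hne)
        · by_cases hyc : y ∈ c
          · exact ((hcb hyc).2 x (hvab ▸ hx) hne).symm
          · have hxC : x ∈ C := verts_not_c_mem_common hca hx hxc
            have hyC : y ∈ C := verts_not_c_mem_common hca hy hyc
            have h1 : (Φ Ja).Adj ⟨x, hxC⟩ ⟨y, hyC⟩ := hxy
            rw [hab] at h1
            exact h1
      refine SimpleGraph.Subgraph.ext hverts ?_
      ext x y
      exact ⟨hAdj J1 J2 hc1 hc2 hverts heq x y,
        hAdj J2 J1 hc2 hc1 hverts.symm heq.symm x y⟩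
  -- relabel Gc on Fin (deltaC G c)
  haveI : Fintype ↥C := Fintype.ofFinite _
  have hcardC : Fintype.card ↥C = deltaC G c := by
    rw [← Nat.card_eq_fintype_card, Nat.card_coe_set_eq]
    rfl
  set e := Fintype.equivFinOfCardEq hcardC with he
  have isoG' := SimpleGraph.Iso.comap e.symm Gc
  have step2 : _root_.copyCount Hd Gc = _root_.copyCount Hd (Gc.comap e.symm.toEmbedding) :=
    (copyCount_eq_of_iso Hd isoG').symm
  have hωu : u ≤ omegaC G c := le_omegaC (le_refl c) hclique
  have hfree : (Gc.comap e.symm.toEmbedding).CliqueFree (omegaC G c - u + 1) := by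
    intro t ht
    set emb : Fin (deltaC G c) ↪ V :=
      ⟨fun x => (↑(e.symm x) : V), fun a b hab => e.symm.injective (Subtype.ext hab)⟩ with hemb
    have hclique2 : G.IsNClique (omegaC G c - u + 1) (t.map emb) := by
      constructor
      · intro a ha b hb hab
        simp only [Finset.coe_map, Set.mem_image, Finset.mem_coe] at ha hb
        obtain ⟨a', ha', rfl⟩ := ha
        obtain ⟨b', hb', rfl⟩ := hb
        have hne : a' ≠ b' := fun hh => hab (by rw [hh])
        exact ht.1 ha' hb' hne
      · rw [Finset.card_map, ht.card_eq]
    have hsub : ↑(t.map emb) ⊆ commonNbhd G c := by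
      intro x hx
      simp only [Finset.coe_map, Set.mem_image, Finset.mem_coe] at hx
      obtain ⟨a', -, rfl⟩ := hx
      exact (e.symm a').2
    have := clique_common_le_omegaC hclique hsub hclique2
    omega
  have step3 := hTuran (omegaC G c - u) (by omega) (deltaC G c)
    (Gc.comap e.symm.toEmbedding) hfree
  calc {J : G.Subgraph | Nonempty (J.coe ≃g H) ∧ ↑c ⊆ subDomSet J}.ncard
      ≤ _root_.copyCount Hd Gc := step1
    _ = _root_.copyCount Hd (Gc.comap e.symm.toEmbedding) := step2
    _ ≤ _root_.copyCount Hd (turanGraph (deltaC G c) (omegaC G c - u)) := step3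

end BigLemmas


/-- Abbreviation: the Turán copy count associated to a clique `c`. -/
noncomputable def NcAux {h : ℕ} (H : SimpleGraph (Fin h)) (D : Finset (Fin h)) (u : ℕ)
    {V : Type*} (G : SimpleGraph V) (c : Finset V) : ℕ :=
  _root_.copyCount (H.induce ((↑D : Set (Fin h))ᶜ)) (turanGraph (deltaC G c) (omegaC G c - u))

/-- Abbreviation: the Turán copy count associated to a subgraph `J`. -/
noncomputable def NJAux {h : ℕ} (H : SimpleGraph (Fin h)) (D : Finset (Fin h)) (u : ℕ)
    {V : Type*} (G : SimpleGraph V) (J : G.Subgraph) : ℕ :=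
  _root_.copyCount (H.induce ((↑D : Set (Fin h))ᶜ)) (turanGraph (deltaJ G u J) (omegaJ G u J - u))

/-- the localized inequality
`Σ_{J ∈ H(G)} 1/N(H^{↓u}, T_{ω(J)−u}(Δ(J))) ≤ k^u(G)/C(dom H, u)`. -/
theorem stmt16 {h : ℕ} (H : SimpleGraph (Fin h)) (u : ℕ) (hu : 1 ≤ u)
    (hdom : u ≤ domCount H) (D : Finset (Fin h)) (hD : ↑D ⊆ domSet H) (hDcard : D.card = u)
    (ω₀ : ℕ)
    (hTuran : ∀ r : ℕ, ω₀ ≤ r → ∀ (n : ℕ) (G' : SimpleGraph (Fin n)),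
      G'.CliqueFree (r + 1) →
        _root_.copyCount (H.induce ((↑D : Set (Fin h))ᶜ)) G' ≤
          _root_.copyCount (H.induce ((↑D : Set (Fin h))ᶜ)) (turanGraph n r))
    {V : Type*} [Fintype V] (G : SimpleGraph V)
    (hloc : ∀ c : Finset V, c.card = u →
      (∃ J : G.Subgraph, Nonempty (J.coe ≃g H) ∧ ↑c ⊆ subDomSet J) →
        ω₀ + u ≤ omegaC G c) :
    ∑' J : {J : G.Subgraph // Nonempty (J.coe ≃g H)},
        (1 : ℝ) / _root_.copyCount (H.induce ((↑D : Set (Fin h))ᶜ))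
          (turanGraph (deltaJ G u J.1) (omegaJ G u J.1 - u)) ≤
      (kclique u G : ℝ) / (domCount H).choose u := by
  classical
  haveI : Fintype {J : G.Subgraph // Nonempty (J.coe ≃g H)} := Fintype.ofFinite _
  show ∑' J : {J : G.Subgraph // Nonempty (J.coe ≃g H)}, (1 : ℝ) / NJAux H D u G J.1 ≤
      (kclique u G : ℝ) / (domCount H).choose u
  rw [tsum_fintype]
  set Cch := (domCount H).choose u with hCch
  have hCchpos : 0 < Cch := Nat.choose_pos hdom
  have hCpos : (0 : ℝ) < Cch := by exact_mod_cast hCchpos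
  set 𝒞 : Finset (Finset V) := Finset.univ.filter (fun s => G.IsNClique u s) with h𝒞
  have hkc : kclique u G = 𝒞.card := by
    rw [kclique]
    have hset : {s : Finset V | G.IsNClique u s} = ↑𝒞 := by
      ext s; simp [h𝒞]
    rw [hset, Set.ncard_coe_finset]
  set SJ : {J : G.Subgraph // Nonempty (J.coe ≃g H)} → Finset (Finset V) :=
    fun J => (Set.toFinite (subDomSet J.1)).toFinset.powersetCard u with hSJ
  have hSJmem : ∀ (J : {J : G.Subgraph // Nonempty (J.coe ≃g H)}) (c : Finset V),
      c ∈ SJ J ↔ (↑c ⊆ subDomSet J.1 ∧ c.card = u) := by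
    intro J c
    rw [hSJ]
    simp only [Finset.mem_powersetCard]
    constructor
    · rintro ⟨h1, h2⟩
      exact ⟨fun x hx => (Set.Finite.mem_toFinset _).mp (h1 hx), h2⟩
    · rintro ⟨h1, h2⟩
      exact ⟨fun x hx => (Set.Finite.mem_toFinset _).mpr (h1 hx), h2⟩
  have hSJcard : ∀ J : {J : G.Subgraph // Nonempty (J.coe ≃g H)}, (SJ J).card = Cch := by
    intro J
    rw [hSJ]
    rw [Finset.card_powersetCard]
    congr 1
    rw [← Set.ncard_eq_toFinset_card (subDomSet J.1) (Set.toFinite _)]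
    exact ncard_subDom (Classical.choice J.2)
  have hSJsub : ∀ J : {J : G.Subgraph // Nonempty (J.coe ≃g H)}, SJ J ⊆ 𝒞 := by
    intro J c hc
    rw [hSJmem] at hc
    rw [h𝒞, Finset.mem_filter]
    exact ⟨Finset.mem_univ c, ⟨isClique_of_subDom hc.1, hc.2⟩⟩
  set cnt : Finset V → ℕ :=
    fun c => (Finset.univ.filter
      (fun J : {J : G.Subgraph // Nonempty (J.coe ≃g H)} => c ∈ SJ J)).card with hcnt
  have hcnt_le : ∀ c ∈ 𝒞, cnt c ≤ NcAux H D u G c := by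
    intro c hc𝒞
    rw [h𝒞, Finset.mem_filter] at hc𝒞
    rcases Finset.eq_empty_or_nonempty (Finset.univ.filter
        (fun J : {J : G.Subgraph // Nonempty (J.coe ≃g H)} => c ∈ SJ J)) with hemp | ⟨J₀, hJ₀⟩
    · rw [hcnt]
      simp only [hemp, Finset.card_empty]
      exact Nat.zero_le _
    · have hJ₀' := (Finset.mem_filter.mp hJ₀).2
      rw [hSJmem] at hJ₀'
      have hω : ω₀ + u ≤ omegaC G c := hloc c hJ₀'.2 ⟨J₀.1, J₀.2, hJ₀'.1⟩
      have key := key_count H u hu D hD hDcard ω₀ hTuran G c hJ₀'.2 hω hc𝒞.2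
      refine le_trans (le_of_eq ?_) key
      show (Finset.univ.filter
        (fun J : {J : G.Subgraph // Nonempty (J.coe ≃g H)} => c ∈ SJ J)).card = _
      rw [← Set.ncard_coe_finset]
      have himg : Subtype.val '' (↑(Finset.univ.filter
          (fun J : {J : G.Subgraph // Nonempty (J.coe ≃g H)} => c ∈ SJ J)) :
            Set {J : G.Subgraph // Nonempty (J.coe ≃g H)}) =
          {J : G.Subgraph | Nonempty (J.coe ≃g H) ∧ ↑c ⊆ subDomSet J} := by
        ext J
        simp only [Set.mem_image, Finset.coe_filter, Finset.mem_univ, true_and,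
          Set.mem_setOf_eq]
        constructor
        · rintro ⟨⟨J', hJ'⟩, hmem, rfl⟩
          rw [hSJmem] at hmem
          exact ⟨hJ', hmem.1⟩
        · rintro ⟨h1, h2⟩
          exact ⟨⟨J, h1⟩, (hSJmem ⟨J, h1⟩ c).mpr ⟨h2, hJ₀'.2⟩, rfl⟩
      rw [← himg, Set.ncard_image_of_injective _ Subtype.val_injective]
  have hNc_le_NJ : ∀ (J : {J : G.Subgraph // Nonempty (J.coe ≃g H)}) (c : Finset V),
      c ∈ SJ J → NcAux H D u G c ≤ NJAux H D u G J.1 := by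
    intro J c hc
    rw [hSJmem] at hc
    have hcl : G.IsNClique u c := ⟨isClique_of_subDom hc.1, hc.2⟩
    have hω : ω₀ + u ≤ omegaC G c := hloc c hc.2 ⟨J.1, J.2, hc.1⟩
    have hωu : u ≤ omegaC G c := le_omegaC (le_refl c) hcl
    apply turan_count_mono H D ω₀ hTuran (le_deltaJ hc.1 hc.2)
      (Nat.sub_le_sub_right (le_omegaJ hc.1 hc.2) u) (by omega)
    intro hr0
    by_contra hδ
    have hδpos : 0 < deltaC G c := Nat.pos_of_ne_zero hδ
    rw [deltaC, Set.ncard_pos (Set.toFinite _)] at hδpos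
    obtain ⟨v, hv⟩ := hδpos
    have h1 : G.IsNClique 1 {v} := by
      constructor
      · simp [Set.pairwise_singleton]
      · exact Finset.card_singleton v
    have hsub : (↑({v} : Finset V) : Set V) ⊆ commonNbhd G c := by
      intro x hx
      simp only [Finset.coe_singleton, Set.mem_singleton_iff] at hx
      rwa [hx]
    have := clique_common_le_omegaC hcl hsub h1
    omega
  have hNc_pos : ∀ (J : {J : G.Subgraph // Nonempty (J.coe ≃g H)}) (c : Finset V),
      c ∈ SJ J → 1 ≤ NcAux H D u G c := by
    intro J c hc
    have h1 : 1 ≤ cnt c := by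
      rw [hcnt]
      apply Finset.card_pos.mpr
      exact ⟨J, Finset.mem_filter.mpr ⟨Finset.mem_univ J, hc⟩⟩
    exact le_trans h1 (hcnt_le c (hSJsub J hc))
  have main1 : ∀ J : {J : G.Subgraph // Nonempty (J.coe ≃g H)},
      (1 : ℝ) / NJAux H D u G J.1 ≤
        (1 / Cch) * ∑ c ∈ SJ J, (1 : ℝ) / NcAux H D u G c := by
    intro J
    have hterm : ∀ c ∈ SJ J, (1 : ℝ) / NJAux H D u G J.1 ≤ 1 / NcAux H D u G c := by
      intro c hc
      apply one_div_le_one_div_of_le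
      · exact_mod_cast hNc_pos J c hc
      · exact_mod_cast hNc_le_NJ J c hc
    have h2 : ((SJ J).card : ℝ) * ((1 : ℝ) / NJAux H D u G J.1) ≤
        ∑ c ∈ SJ J, (1 : ℝ) / NcAux H D u G c := by
      have := Finset.card_nsmul_le_sum (SJ J) (fun c => (1 : ℝ) / NcAux H D u G c)
        ((1 : ℝ) / NJAux H D u G J.1) hterm
      simpa [nsmul_eq_mul] using this
    rw [hSJcard J] at h2
    calc (1 : ℝ) / NJAux H D u G J.1
        = (1 / Cch) * ((Cch : ℝ) * ((1 : ℝ) / NJAux H D u G J.1)) := by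
          field_simp
      _ ≤ (1 / Cch) * ∑ c ∈ SJ J, (1 : ℝ) / NcAux H D u G c := by
          apply mul_le_mul_of_nonneg_left h2 (by positivity)
  have main2 : ∑ J : {J : G.Subgraph // Nonempty (J.coe ≃g H)}, (1 : ℝ) / NJAux H D u G J.1 ≤
      (1 / Cch) * ∑ J : {J : G.Subgraph // Nonempty (J.coe ≃g H)},
        ∑ c ∈ SJ J, (1 : ℝ) / NcAux H D u G c := by
    rw [Finset.mul_sum]
    exact Finset.sum_le_sum (fun J _ => main1 J)
  have swap : ∑ J : {J : G.Subgraph // Nonempty (J.coe ≃g H)},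
      ∑ c ∈ SJ J, (1 : ℝ) / NcAux H D u G c =
      ∑ c ∈ 𝒞, (cnt c : ℝ) * (1 / NcAux H D u G c) := by
    have h1 : ∀ J : {J : G.Subgraph // Nonempty (J.coe ≃g H)},
        ∑ c ∈ SJ J, (1 : ℝ) / NcAux H D u G c =
          ∑ c ∈ 𝒞, if c ∈ SJ J then (1 : ℝ) / NcAux H D u G c else 0 := by
      intro J
      rw [Finset.sum_ite_mem, Finset.inter_eq_right.mpr (hSJsub J)]
    simp_rw [h1]
    rw [Finset.sum_comm]
    apply Finset.sum_congr rfl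
    intro c _
    rw [← Finset.sum_filter]
    rw [Finset.sum_const, nsmul_eq_mul]
  have main3 : ∑ c ∈ 𝒞, (cnt c : ℝ) * (1 / NcAux H D u G c) ≤ ∑ c ∈ 𝒞, (1 : ℝ) := by
    apply Finset.sum_le_sum
    intro c hc
    rw [mul_one_div]
    apply div_le_one_of_le₀
    · exact_mod_cast hcnt_le c hc
    · positivity
  calc ∑ J : {J : G.Subgraph // Nonempty (J.coe ≃g H)}, (1 : ℝ) / NJAux H D u G J.1
      ≤ (1 / Cch) * ∑ J : {J : G.Subgraph // Nonempty (J.coe ≃g H)},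
          ∑ c ∈ SJ J, (1 : ℝ) / NcAux H D u G c := main2
    _ = (1 / Cch) * ∑ c ∈ 𝒞, (cnt c : ℝ) * (1 / NcAux H D u G c) := by rw [swap]
    _ ≤ (1 / Cch) * ∑ c ∈ 𝒞, (1 : ℝ) := mul_le_mul_of_nonneg_left main3 (by positivity)
    _ = (𝒞.card : ℝ) / Cch := by
        rw [Finset.sum_const, nsmul_eq_mul, mul_one]
        ring
    _ = (kclique u G : ℝ) / Cch := by rw [hkc]
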